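/- Let I be an HRS instance in which every resident has size 1 or 2, every hospital has upper quota 2, and every preference list has length at most 3. Construct the CA instance J(I) as follows: every resident r_j becomes a course c_j with upper quota 1 and O(c_j) equal to the size of r_j; every hospital h_i becomes a student s_i with T(s_i) = 2; all preference lists are transferred via this bijection; additionally, for each student s_i a dummy course c_i' with O(c_i') = 1 and upper quota 1 is appended at the end of s_i's preference list, and c_i''s preference list contains only s_i. Then J(I) admits a first-coalition-stable matching if and only if I admits a stable matching. -/

import Mathlib

open Finset

/-- An instance of the Course Allocation problem: students `S`, courses `C`,
mutual acceptability `acc`, strict preferences of students over (acceptable) courses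
and of courses over (acceptable) students, positive credits, upper quotas and credit limits. -/
structure CA (S C : Type*) where
  acc : S → C → Prop
  sPref : S → C → C → Prop
  cPref : C → S → S → Prop
  credits : C → ℚ
  quota : C → ℕ
  limit : S → ℚ
  credits_pos : ∀ c, 0 < credits c
  sPref_irrefl : ∀ s c, ¬ sPref s c c
  sPref_trans : ∀ s c₁ c₂ c₃, sPref s c₁ c₂ → sPref s c₂ c₃ → sPref s c₁ c₃
  sPref_total : ∀ s c₁ c₂, acc s c₁ → acc s c₂ → c₁ ≠ c₂ → sPref s c₁ c₂ ∨ sPref s c₂ c₁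
  cPref_irrefl : ∀ c s, ¬ cPref c s s
  cPref_trans : ∀ c s₁ s₂ s₃, cPref c s₁ s₂ → cPref c s₂ s₃ → cPref c s₁ s₃
  cPref_total : ∀ c s₁ s₂, acc s₁ c → acc s₂ c → s₁ ≠ s₂ → cPref c s₁ s₂ ∨ cPref c s₂ s₁

section CourseAllocation

variable {S C : Type*} [DecidableEq S] [DecidableEq C]

/-- The set `C_M(s)` of courses assigned to student `s` in assignment `M`. -/
def CM (M : Finset (S × C)) (s : S) : Finset C :=
  (M.filter fun p => p.1 = s).image Prod.snd

/-- The set `S_M(c)` of students assigned to course `c` in assignment `M`. -/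
def SM (M : Finset (S × C)) (c : C) : Finset S :=
  (M.filter fun p => p.2 = c).image Prod.fst

/-- The total number of credits `O(D)` of a set of courses `D`. -/
def CA.O (I : CA S C) (D : Finset C) : ℚ := ∑ c ∈ D, I.credits c

/-- `M` is a matching: all pairs acceptable, credit limits and upper quotas respected. -/
def CA.IsMatching (I : CA S C) (M : Finset (S × C)) : Prop :=
  (∀ p ∈ M, I.acc p.1 p.2) ∧
  (∀ s, I.O (CM M s) ≤ I.limit s) ∧
  (∀ c, (SM M c).card ≤ I.quota c)

/-- Feasibility of a matching with respect to families `F` of feasible course sets. -/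
def Feasible (F : S → Set (Finset C)) (M : Finset (S × C)) : Prop :=
  ∀ s, CM M s ∈ F s

/-- `F` is a family of downward-feasible constraints: every feasible set consists of
acceptable courses, and subsets of feasible sets are feasible. -/
def CA.DownwardFeasible (I : CA S C) (F : S → Set (Finset C)) : Prop :=
  (∀ s, ∀ D ∈ F s, ∀ c ∈ D, I.acc s c) ∧
  (∀ s, ∀ D ∈ F s, ∀ D' ⊆ D, D' ∈ F s)

/-- Absent downward-feasible constraints (every set of courses feasible). -/
def noF : S → Set (Finset C) := fun _ => Set.univ

/-- Condition (1) of all blocking definitions: course `c` is undersubscribed in `M`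
or prefers `s` to one of its assigned students. -/
def CA.Wants (I : CA S C) (M : Finset (S × C)) (s : S) (c : C) : Prop :=
  (SM M c).card < I.quota c ∨ ∃ s' ∈ SM M c, I.cPref c s s'

/-- `(s, c)` is a blocking pair of `M` (w.r.t. feasibility constraints `F`). -/
def CA.BlockingPair (I : CA S C) (F : S → Set (Finset C)) (M : Finset (S × C))
    (s : S) (c : C) : Prop :=
  I.acc s c ∧ (s, c) ∉ M ∧ I.Wants M s c ∧
  ∃ D ⊆ CM M s, (∀ c' ∈ D, I.sPref s c c') ∧
    I.O (CM M s) - I.O D + I.credits c ≤ I.limit s ∧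
    (CM M s \ D) ∪ {c} ∈ F s

def CA.PairStable (I : CA S C) (F : S → Set (Finset C)) (M : Finset (S × C)) : Prop :=
  ∀ s c, ¬ I.BlockingPair F M s c

/-- `(s, c)` is a size-blocking pair of `M`: like a blocking pair, but additionally
the dropped set `D` must satisfy `O(D) ≤ O(c)`. -/
def CA.SizeBlockingPair (I : CA S C) (F : S → Set (Finset C)) (M : Finset (S × C))
    (s : S) (c : C) : Prop :=
  I.acc s c ∧ (s, c) ∉ M ∧ I.Wants M s c ∧
  ∃ D ⊆ CM M s, (∀ c' ∈ D, I.sPref s c c') ∧ I.O D ≤ I.credits c ∧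
    I.O (CM M s) - I.O D + I.credits c ≤ I.limit s ∧
    (CM M s \ D) ∪ {c} ∈ F s

def CA.PairSizeStable (I : CA S C) (F : S → Set (Finset C)) (M : Finset (S × C)) : Prop :=
  ∀ s c, ¬ I.SizeBlockingPair F M s c

/-- `(s, B)` is a blocking coalition of `M`. -/
def CA.BlockingCoalition (I : CA S C) (F : S → Set (Finset C)) (M : Finset (S × C))
    (s : S) (B : Finset C) : Prop :=
  B.Nonempty ∧ (∀ c ∈ B, I.acc s c ∧ (s, c) ∉ M) ∧ (∀ c ∈ B, I.Wants M s c) ∧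
  ∃ D ⊆ CM M s, (∀ c ∈ B, ∀ c' ∈ D, I.sPref s c c') ∧ I.O D ≤ I.O B ∧
    I.O (CM M s) - I.O D + I.O B ≤ I.limit s ∧
    (CM M s \ D) ∪ B ∈ F s

def CA.CoalitionStable (I : CA S C) (F : S → Set (Finset C)) (M : Finset (S × C)) : Prop :=
  ∀ s B, ¬ I.BlockingCoalition F M s B

/-- `(s, B)` is a first-blocking coalition of `M`: as a blocking coalition, except that
`s` need only prefer her most-preferred course of `B` to her most-preferred course of `D`
(equivalently, some course of `B` is preferred to every course of `D`; vacuous if `D = ∅`). -/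
def CA.FirstBlockingCoalition (I : CA S C) (F : S → Set (Finset C)) (M : Finset (S × C))
    (s : S) (B : Finset C) : Prop :=
  B.Nonempty ∧ (∀ c ∈ B, I.acc s c ∧ (s, c) ∉ M) ∧ (∀ c ∈ B, I.Wants M s c) ∧
  ∃ D ⊆ CM M s, (∃ b ∈ B, ∀ c' ∈ D, I.sPref s b c') ∧ I.O D ≤ I.O B ∧
    I.O (CM M s) - I.O D + I.O B ≤ I.limit s ∧
    (CM M s \ D) ∪ B ∈ F s

def CA.FirstCoalitionStable (I : CA S C) (F : S → Set (Finset C)) (M : Finset (S × C)) : Prop :=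
  ∀ s B, ¬ I.FirstBlockingCoalition F M s B

/-- Every course exactly fills its upper quota. -/
def CA.CourseComplete (I : CA S C) (M : Finset (S × C)) : Prop :=
  ∀ c, (SM M c).card = I.quota c

/-- Every student takes as many credits as her credit limit. -/
def CA.StudentComplete (I : CA S C) (M : Finset (S × C)) : Prop :=
  ∀ s, I.O (CM M s) = I.limit s

/-- The size of a matching: total number of credits taken by all students. -/
def CA.size [Fintype S] (I : CA S C) (M : Finset (S × C)) : ℚ :=
  ∑ s : S, I.O (CM M s)

/-- `ml` is a master list of students for the instance `I`: a strict total order on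
students with which every course's preferences are consistent. -/
def CA.MasterList (I : CA S C) (ml : S → S → Prop) : Prop :=
  (∀ s, ¬ ml s s) ∧ (∀ s₁ s₂ s₃, ml s₁ s₂ → ml s₂ s₃ → ml s₁ s₃) ∧
  (∀ s₁ s₂, s₁ ≠ s₂ → ml s₁ s₂ ∨ ml s₂ s₁) ∧
  (∀ c s s', I.acc s c → I.acc s' c → (I.cPref c s s' ↔ ml s s'))

end CourseAllocation
/-- An instance of the Hospitals/Residents problem with Sizes (HRS): residents `R` with
positive sizes, hospitals `H` with upper quotas, mutual acceptability and strict
preference lists on both sides. -/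
structure HRS (R H : Type*) where
  acc : R → H → Prop
  rPref : R → H → H → Prop
  hPref : H → R → R → Prop
  size : R → ℕ
  quota : H → ℕ
  size_pos : ∀ r, 0 < size r
  rPref_irrefl : ∀ r h, ¬ rPref r h h
  rPref_trans : ∀ r h₁ h₂ h₃, rPref r h₁ h₂ → rPref r h₂ h₃ → rPref r h₁ h₃
  rPref_total : ∀ r h₁ h₂, acc r h₁ → acc r h₂ → h₁ ≠ h₂ → rPref r h₁ h₂ ∨ rPref r h₂ h₁
  rPref_dom : ∀ r h₁ h₂, rPref r h₁ h₂ → acc r h₁ ∧ acc r h₂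
  hPref_irrefl : ∀ h r, ¬ hPref h r r
  hPref_trans : ∀ h r₁ r₂ r₃, hPref h r₁ r₂ → hPref h r₂ r₃ → hPref h r₁ r₃
  hPref_total : ∀ h r₁ r₂, acc r₁ h → acc r₂ h → r₁ ≠ r₂ → hPref h r₁ r₂ ∨ hPref h r₂ r₁
  hPref_dom : ∀ h r₁ r₂, hPref h r₁ r₂ → acc r₁ h ∧ acc r₂ h

section HRSDefs

variable {R H : Type*} [Fintype R] [DecidableEq R] [DecidableEq H]

/-- The residents assigned to hospital `h` by `μ`. -/
def HRS.assigned (μ : R → Option H) (h : H) : Finset R :=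
  Finset.univ.filter fun r => μ r = some h

/-- The total size of the residents assigned to hospital `h`. -/
def HRS.load (I : HRS R H) (μ : R → Option H) (h : H) : ℕ :=
  ∑ r ∈ HRS.assigned μ h, I.size r

/-- `μ` is an HRS matching: assignments are acceptable and capacities respected. -/
def HRS.IsMatching (I : HRS R H) (μ : R → Option H) : Prop :=
  (∀ r h, μ r = some h → I.acc r h) ∧ ∀ h, I.load μ h ≤ I.quota h

open Classical in
/-- `(r, h)` blocks `μ`: `r` is unmatched or prefers `h` to her hospital, and `h` has
room for `r` once the assignees it likes less than `r` are discounted, i.e.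
`q(h) - load(h) + (total size of assignees worse than r) ≥ s(r)`. -/
def HRS.Blocks (I : HRS R H) (μ : R → Option H) (r : R) (h : H) : Prop :=
  I.acc r h ∧ μ r ≠ some h ∧
  (μ r = none ∨ ∃ h', μ r = some h' ∧ I.rPref r h h') ∧
  I.size r + I.load μ h ≤
    I.quota h + ∑ r' ∈ (HRS.assigned μ h).filter (fun r' => I.hPref h r r'), I.size r'

/-- `μ` is a stable matching of the HRS instance `I`. -/
def HRS.Stable (I : HRS R H) (μ : R → Option H) : Prop :=
  I.IsMatching μ ∧ ∀ r h, ¬ I.Blocks μ r h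

end HRSDefs
/-- The CA instance `J(I)` built from an HRS instance `I`: each hospital `h` becomes a
student with credit limit 2; each resident `r` becomes a course `Sum.inl r` with upper
quota 1 and credits equal to `r`'s size; in addition each student `h` gets a dummy
1-credit course `Sum.inr h` with upper quota 1, appended at the end of `h`'s preference
list and acceptable only to `h`.  All preference lists are transferred via the bijection. -/
def JofHRS {R H : Type*} (I : HRS R H) : CA H (R ⊕ H) where
  acc i c :=
    match c with
    | .inl r => I.acc r i
    | .inr h => h = i
  sPref i c c' :=
    match c, c' with
    | .inl r, .inl r' => I.hPref i r r'
    | .inl r, .inr h => I.acc r i ∧ h = i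
    | .inr _, _ => False
  cPref c s s' :=
    match c with
    | .inl r => I.rPref r s s'
    | .inr _ => False
  credits c :=
    match c with
    | .inl r => (I.size r : ℚ)
    | .inr _ => 1
  quota _ := 1
  limit _ := 2
  credits_pos := by
    rintro (r | h)
    · show (0 : ℚ) < (I.size r : ℚ); exact_mod_cast I.size_pos r
    · show (0 : ℚ) < 1; norm_num
  sPref_irrefl := by
    rintro i (r | h)
    · exact I.hPref_irrefl i r
    · exact not_false
  sPref_trans := by
    rintro i (r₁ | h₁) (r₂ | h₂) (r₃ | h₃) h12 h23
    · exact I.hPref_trans i r₁ r₂ r₃ h12 h23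
    · exact ⟨(I.hPref_dom i r₁ r₂ h12).1, h23.2⟩
    · exact False.elim h23
    · exact False.elim h23
    · exact False.elim h12
    · exact False.elim h12
    · exact False.elim h12
    · exact False.elim h12
  sPref_total := by
    rintro i (r₁ | h₁) (r₂ | h₂) h1 h2 hne
    · exact I.hPref_total i r₁ r₂ h1 h2 (fun h => hne (congrArg Sum.inl h))
    · exact Or.inl ⟨h1, h2⟩
    · exact Or.inr ⟨h2, h1⟩
    · exact absurd (congrArg Sum.inr (h1.trans h2.symm)) hne
  cPref_irrefl := by
    rintro (r | h) s
    · exact I.rPref_irrefl r s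
    · exact not_false
  cPref_trans := by
    rintro (r | h) s₁ s₂ s₃ h12 h23
    · exact I.rPref_trans r s₁ s₂ s₃ h12 h23
    · exact False.elim h12
  cPref_total := by
    rintro (r | h) s₁ s₂ h1 h2 hne
    · exact I.rPref_total r s₁ s₂ h1 h2 hne
    · exact absurd (h1.symm.trans h2) hne


section MainAux

variable {S C : Type*} [DecidableEq S] [DecidableEq C]

lemma mem_CM' {M : Finset (S × C)} {s : S} {c : C} : c ∈ CM M s ↔ (s, c) ∈ M := by
  simp only [CM, Finset.mem_image, Finset.mem_filter]
  constructor
  · rintro ⟨⟨a, b⟩, ⟨hm, rfl⟩, rfl⟩; exact hm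
  · intro h; exact ⟨(s, c), ⟨h, rfl⟩, rfl⟩

lemma mem_SM' {M : Finset (S × C)} {s : S} {c : C} : s ∈ SM M c ↔ (s, c) ∈ M := by
  simp only [SM, Finset.mem_image, Finset.mem_filter]
  constructor
  · rintro ⟨⟨a, b⟩, ⟨hm, rfl⟩, rfl⟩; exact hm
  · intro h; exact ⟨(s, c), ⟨h, rfl⟩, rfl⟩

lemma CA.O_nonneg (I : CA S C) (D : Finset C) : 0 ≤ I.O D :=
  Finset.sum_nonneg fun c _ => (I.credits_pos c).le

lemma CA.O_mono (I : CA S C) {D E : Finset C} (h : D ⊆ E) : I.O D ≤ I.O E :=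
  Finset.sum_le_sum_of_subset_of_nonneg h fun c _ _ => (I.credits_pos c).le

lemma CA.le_O (I : CA S C) {c : C} {D : Finset C} (h : c ∈ D) : I.credits c ≤ I.O D :=
  Finset.single_le_sum (fun c _ => (I.credits_pos c).le) h

lemma CA.O_singleton (I : CA S C) (c : C) : I.O {c} = I.credits c :=
  Finset.sum_singleton _ _

lemma CA.O_empty (I : CA S C) : I.O (∅ : Finset C) = 0 :=
  Finset.sum_empty

end MainAux

section JAux

variable {R H : Type*} [DecidableEq R] [DecidableEq H]

@[simp] lemma JofHRS_credits_inl (I : HRS R H) (r : R) :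
    (JofHRS I).credits (Sum.inl r) = (I.size r : ℚ) := rfl

@[simp] lemma JofHRS_credits_inr (I : HRS R H) (h : H) :
    (JofHRS I).credits (Sum.inr h) = 1 := rfl

@[simp] lemma JofHRS_quota (I : HRS R H) (c : R ⊕ H) : (JofHRS I).quota c = 1 := rfl

@[simp] lemma JofHRS_limit (I : HRS R H) (h : H) : (JofHRS I).limit h = 2 := rfl

@[simp] lemma JofHRS_acc_inl (I : HRS R H) (i : H) (r : R) :
    (JofHRS I).acc i (Sum.inl r) ↔ I.acc r i := Iff.rfl

@[simp] lemma JofHRS_acc_inr (I : HRS R H) (i : H) (h : H) :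
    (JofHRS I).acc i (Sum.inr h) ↔ h = i := Iff.rfl

@[simp] lemma JofHRS_sPref_ll (I : HRS R H) (i : H) (r r' : R) :
    (JofHRS I).sPref i (Sum.inl r) (Sum.inl r') ↔ I.hPref i r r' := Iff.rfl

@[simp] lemma JofHRS_sPref_lr (I : HRS R H) (i : H) (r : R) (h : H) :
    (JofHRS I).sPref i (Sum.inl r) (Sum.inr h) ↔ I.acc r i ∧ h = i := Iff.rfl

@[simp] lemma JofHRS_sPref_rl (I : HRS R H) (i : H) (h : H) (r : R) :
    (JofHRS I).sPref i (Sum.inr h) (Sum.inl r) ↔ False := Iff.rfl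

@[simp] lemma JofHRS_sPref_rr (I : HRS R H) (i : H) (h h' : H) :
    (JofHRS I).sPref i (Sum.inr h) (Sum.inr h') ↔ False := Iff.rfl

@[simp] lemma JofHRS_cPref_l (I : HRS R H) (r : R) (s s' : H) :
    (JofHRS I).cPref (Sum.inl r) s s' ↔ I.rPref r s s' := Iff.rfl

lemma JofHRS_O_split (I : HRS R H) (E : Finset (R ⊕ H)) :
    (JofHRS I).O E = (∑ r ∈ E.toLeft, (I.size r : ℚ)) + (E.toRight.card : ℚ) := by
  show ∑ c ∈ E, (JofHRS I).credits c = _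
  conv_lhs => rw [← Finset.toLeft_disjSum_toRight (u := E)]
  rw [Finset.sum_disjSum]
  simp

end JAux

section MainLemmas

variable {R H : Type*} [Fintype R] [Fintype H] [DecidableEq R] [DecidableEq H]

lemma JofHRS_forward (I : HRS R H)
    (hsize : ∀ r, I.size r = 1 ∨ I.size r = 2) (hquota : ∀ h, I.quota h = 2)
    (M : Finset (H × (R ⊕ H))) (hM : (JofHRS I).IsMatching M)
    (hstab : (JofHRS I).FirstCoalitionStable noF M) :
    ∃ μ : R → Option H, I.Stable μ := by
  classical
  obtain ⟨haccM, hlimM, hquoM⟩ := hM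
  have huniq : ∀ (r : R) (h₁ h₂ : H), (h₁, Sum.inl r) ∈ M → (h₂, Sum.inl r) ∈ M → h₁ = h₂ := by
    intro r h₁ h₂ m1 m2
    by_contra hne
    have hsub : ({h₁, h₂} : Finset H) ⊆ SM M (Sum.inl r) := by
      intro x hx
      rcases Finset.mem_insert.mp hx with rfl | hx
      · exact mem_SM'.mpr m1
      · rw [Finset.mem_singleton.mp hx]; exact mem_SM'.mpr m2
    have h2le : 2 ≤ (SM M (Sum.inl r)).card := by
      calc 2 = ({h₁, h₂} : Finset H).card := by
            rw [Finset.card_insert_of_notMem (by simpa using hne), Finset.card_singleton]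
        _ ≤ _ := Finset.card_le_card hsub
    have h1 := hquoM (Sum.inl r)
    rw [JofHRS_quota] at h1
    omega
  set μ : R → Option H :=
    fun r => if hr : ∃ h, (h, Sum.inl r) ∈ M then some hr.choose else none with hμdef
  have hμ : ∀ (r : R) (h : H), μ r = some h ↔ (h, Sum.inl r) ∈ M := by
    intro r h
    constructor
    · intro he
      by_cases hr : ∃ h', (h', Sum.inl r) ∈ M
      · rw [hμdef] at he
        simp only [hr, dif_pos] at he
        rw [← Option.some_inj.mp he]
        exact hr.choose_spec
      · rw [hμdef] at he
        simp only [hr, dif_neg, not_false_iff] at he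
        exact (Option.some_ne_none _ he.symm).elim
    · intro hm
      have hr : ∃ h', (h', Sum.inl r) ∈ M := ⟨h, hm⟩
      rw [hμdef]
      simp only [hr, dif_pos]
      exact congrArg some (huniq r _ h hr.choose_spec hm)
  have hCMleft : ∀ h : H, (CM M h).toLeft = HRS.assigned μ h := by
    intro h; ext r
    simp only [Finset.mem_toLeft, HRS.assigned, Finset.mem_filter, Finset.mem_univ,
      true_and, mem_CM']
    exact (hμ r h).symm
  have hCMright : ∀ h h' : H, Sum.inr h' ∈ CM M h → h' = h := by
    intro h h' hmem
    simpa using haccM _ (mem_CM'.mp hmem)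
  have hOCM : ∀ h : H, (JofHRS I).O (CM M h)
      = (I.load μ h : ℚ) + ((CM M h).toRight.card : ℚ) := by
    intro h; rw [JofHRS_O_split, hCMleft]
    simp [HRS.load]
  have hload : ∀ h, I.load μ h ≤ 2 := by
    intro h
    have h1 := hlimM h
    rw [hOCM, JofHRS_limit] at h1
    have hc : (0:ℚ) ≤ ((CM M h).toRight.card : ℚ) := by positivity
    have : (I.load μ h : ℚ) ≤ 2 := by linarith
    exact_mod_cast this
  refine ⟨μ, ⟨⟨?_, ?_⟩, ?_⟩⟩
  · intro r h he
    exact haccM _ ((hμ r h).mp he)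
  · intro h; rw [hquota h]; exact hload h
  · intro r₀ h hblk
    obtain ⟨hacc₀, hne₀, hpref₀, hcap₀⟩ := hblk
    set Wr := (HRS.assigned μ h).filter (fun r' => I.hPref h r₀ r') with hWr
    set W := (CM M h).filter (fun c => (JofHRS I).sPref h (Sum.inl r₀) c) with hWdef
    have hWleft : W.toLeft = Wr := by
      ext r'
      simp only [hWdef, hWr, Finset.mem_toLeft, Finset.mem_filter, HRS.assigned,
        Finset.mem_univ, true_and, mem_CM', JofHRS_sPref_ll]
      rw [hμ]
    have hWsub : W ⊆ CM M h := Finset.filter_subset _ _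
    have hWrightmem : Sum.inr h ∈ W ↔ Sum.inr h ∈ CM M h := by
      simp only [hWdef, Finset.mem_filter, JofHRS_sPref_lr]
      exact ⟨fun x => x.1, fun x => ⟨x, hacc₀, by trivial⟩⟩
    have hWright : W.toRight = (CM M h).toRight := by
      apply Finset.Subset.antisymm
      · exact fun x hx => Finset.mem_toRight.mpr (hWsub (Finset.mem_toRight.mp hx))
      · intro x hx
        have hx' := Finset.mem_toRight.mp hx
        have hxh : x = h := hCMright h x hx'
        subst hxh
        exact Finset.mem_toRight.mpr (hWrightmem.mpr hx')
    have hOW : (JofHRS I).O W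
        = (∑ r' ∈ Wr, (I.size r' : ℚ)) + ((CM M h).toRight.card : ℚ) := by
      rw [JofHRS_O_split, hWleft, hWright]
    have hcapQ : (I.size r₀ : ℚ) + (I.load μ h : ℚ)
        ≤ 2 + ∑ r' ∈ Wr, (I.size r' : ℚ) := by
      rw [hquota h] at hcap₀
      exact_mod_cast hcap₀
    have hK : (JofHRS I).O (CM M h) - (JofHRS I).O W + (I.size r₀ : ℚ) ≤ 2 := by
      rw [hOCM, hOW]; linarith
    have hnotin : (h, Sum.inl r₀) ∉ M := fun hm => hne₀ ((hμ r₀ h).mpr hm)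
    have hwants : (JofHRS I).Wants M h (Sum.inl r₀) := by
      rcases hpref₀ with hnone | ⟨h', hm', hp'⟩
      · left
        rw [JofHRS_quota]
        have hSMe : SM M (Sum.inl r₀) = ∅ := by
          rw [Finset.eq_empty_iff_forall_notMem]
          intro s' hs'
          have h1 := (hμ r₀ s').mpr (mem_SM'.mp hs')
          rw [hnone] at h1
          exact (Option.some_ne_none _ h1.symm).elim
        rw [hSMe, Finset.card_empty]
        norm_num
      · right
        exact ⟨h', mem_SM'.mpr ((hμ r₀ h').mp hm'), hp'⟩
    have hDpref : ∀ c' ∈ W, (JofHRS I).sPref h (Sum.inl r₀) c' :=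
      fun c' hc' => (Finset.mem_filter.mp hc').2
    by_cases hc1 : (JofHRS I).O W ≤ (I.size r₀ : ℚ)
    · exact hstab h {Sum.inl r₀} ⟨Finset.singleton_nonempty _,
        (by intro c hc; rw [Finset.mem_singleton.mp hc]; exact ⟨hacc₀, hnotin⟩),
        (by intro c hc; rw [Finset.mem_singleton.mp hc]; exact hwants),
        W, hWsub, ⟨Sum.inl r₀, Finset.mem_singleton_self _, hDpref⟩,
        (by rw [CA.O_singleton, JofHRS_credits_inl]; exact hc1),
        (by rw [CA.O_singleton, JofHRS_credits_inl, JofHRS_limit]; exact hK),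
        trivial⟩
    · push_neg at hc1
      have hOW2 : (JofHRS I).O W ≤ 2 := by
        have h1 := (JofHRS I).O_mono hWsub
        have h2 := hlimM h
        rw [JofHRS_limit] at h2
        linarith
      have hs1 : I.size r₀ = 1 := by
        rcases hsize r₀ with hs | hs
        · exact hs
        · exfalso; rw [hs] at hc1; norm_num at hc1; linarith
      by_cases hdum : Sum.inr h ∈ CM M h
      · refine hstab h {Sum.inl r₀} ⟨Finset.singleton_nonempty _,
          (by intro c hc; rw [Finset.mem_singleton.mp hc]; exact ⟨hacc₀, hnotin⟩),
          (by intro c hc; rw [Finset.mem_singleton.mp hc]; exact hwants),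
          {Sum.inr h}, Finset.singleton_subset_iff.mpr hdum,
          ⟨Sum.inl r₀, Finset.mem_singleton_self _, ?_⟩, ?_, ?_, trivial⟩
        · intro c' hc'
          rw [Finset.mem_singleton.mp hc']
          rw [JofHRS_sPref_lr]
          exact ⟨hacc₀, rfl⟩
        · rw [CA.O_singleton, CA.O_singleton, JofHRS_credits_inl, JofHRS_credits_inr, hs1]
          norm_num
        · rw [CA.O_singleton, CA.O_singleton, JofHRS_credits_inl, JofHRS_credits_inr,
            JofHRS_limit, hs1]
          have h2 := hlimM h
          rw [JofHRS_limit] at h2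
          push_cast
          linarith
      · have hdumM : (h, Sum.inr h) ∉ M := fun hm => hdum (mem_CM'.mpr hm)
        have hwantsd : (JofHRS I).Wants M h (Sum.inr h) := by
          left
          rw [JofHRS_quota]
          have hSMe : SM M (Sum.inr h) = ∅ := by
            rw [Finset.eq_empty_iff_forall_notMem]
            intro s' hs'
            have hm := mem_SM'.mp hs'
            have hh : h = s' := by simpa using haccM _ hm
            exact hdumM (hh ▸ hm)
          rw [hSMe, Finset.card_empty]
          norm_num
        have hne2 : (Sum.inl r₀ : R ⊕ H) ≠ Sum.inr h := Sum.inl_ne_inr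
        have hOB : (JofHRS I).O {Sum.inl r₀, Sum.inr h} = 2 := by
          show ∑ c ∈ ({Sum.inl r₀, Sum.inr h} : Finset (R ⊕ H)), (JofHRS I).credits c = 2
          rw [Finset.sum_pair hne2, JofHRS_credits_inl, JofHRS_credits_inr, hs1]
          norm_num
        have htR0 : (CM M h).toRight = ∅ := by
          rw [Finset.eq_empty_iff_forall_notMem]
          intro x hx
          have hx' := Finset.mem_toRight.mp hx
          have hxh : x = h := hCMright h x hx'
          rw [hxh] at hx'
          exact hdum hx'
        have hwsload : (I.load μ h : ℚ) ≤ ∑ r' ∈ Wr, (I.size r' : ℚ) := by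
          have hc1' : (1 : ℚ) < ∑ r' ∈ Wr, (I.size r' : ℚ) := by
            rw [hOW, htR0] at hc1
            rw [hs1] at hc1
            simpa using hc1
          have hint : 1 < ∑ r' ∈ Wr, I.size r' := by exact_mod_cast hc1'
          have h2 : I.load μ h ≤ 2 := hload h
          have : I.load μ h ≤ ∑ r' ∈ Wr, I.size r' := by omega
          exact_mod_cast this
        refine hstab h {Sum.inl r₀, Sum.inr h} ⟨Finset.insert_nonempty _ _,
          ?_, ?_, W, hWsub, ⟨Sum.inl r₀, Finset.mem_insert_self _ _, hDpref⟩, ?_, ?_, trivial⟩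
        · intro c hc
          rcases Finset.mem_insert.mp hc with rfl | hc
          · exact ⟨hacc₀, hnotin⟩
          · rw [Finset.mem_singleton.mp hc]
            exact ⟨rfl, hdumM⟩
        · intro c hc
          rcases Finset.mem_insert.mp hc with rfl | hc
          · exact hwants
          · rw [Finset.mem_singleton.mp hc]; exact hwantsd
        · rw [hOB]; exact hOW2
        · rw [hOB, JofHRS_limit, hOCM, htR0, hOW, htR0]
          simp only [Finset.card_empty, Nat.cast_zero, add_zero]
          linarith

lemma JofHRS_backward (I : HRS R H) (hquota : ∀ h, I.quota h = 2)
    (μ : R → Option H) (hst : I.Stable μ) :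
    ∃ M : Finset (H × (R ⊕ H)),
      (JofHRS I).IsMatching M ∧ (JofHRS I).FirstCoalitionStable noF M := by
  classical
  obtain ⟨⟨haccμ, hloadμ⟩, hnoblock⟩ := hst
  set M : Finset (H × (R ⊕ H)) := Finset.univ.filter (fun p =>
    match p.2 with
    | Sum.inl r => μ r = some p.1
    | Sum.inr h' => h' = p.1 ∧ I.load μ p.1 ≤ 1) with hMdef
  have hmeml : ∀ (h : H) (r : R), ((h, Sum.inl r) ∈ M) ↔ μ r = some h := by
    intro h r; simp [hMdef]
  have hmemr : ∀ (h h' : H), ((h, Sum.inr h') ∈ M) ↔ (h' = h ∧ I.load μ h ≤ 1) := by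
    intro h h'; simp [hMdef]
  have hCMleft : ∀ h, (CM M h).toLeft = HRS.assigned μ h := by
    intro h; ext r
    simp only [Finset.mem_toLeft, mem_CM', hmeml, HRS.assigned, Finset.mem_filter,
      Finset.mem_univ, true_and]
  have hCMright : ∀ h, (CM M h).toRight = (if I.load μ h ≤ 1 then {h} else (∅ : Finset H)) := by
    intro h; ext h'
    rw [Finset.mem_toRight, mem_CM', hmemr]
    by_cases hl : I.load μ h ≤ 1
    · simp [hl]
    · simp [hl]
  have hOCM : ∀ h, (JofHRS I).O (CM M h)
      = (I.load μ h : ℚ) + (if I.load μ h ≤ 1 then 1 else 0) := by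
    intro h
    rw [JofHRS_O_split, hCMleft, hCMright]
    congr 1
    · simp [HRS.load]
    · by_cases hl : I.load μ h ≤ 1 <;> simp [hl]
  refine ⟨M, ⟨?_, ?_, ?_⟩, ?_⟩
  · rintro ⟨h, c⟩ hp
    rcases c with r | h'
    · exact haccμ r h ((hmeml h r).mp hp)
    · exact ((hmemr h h').mp hp).1
  · intro h
    rw [hOCM, JofHRS_limit]
    by_cases hl : I.load μ h ≤ 1
    · rw [if_pos hl]
      have : (I.load μ h : ℚ) ≤ 1 := by exact_mod_cast hl
      linarith
    · rw [if_neg hl]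
      have h2 : I.load μ h ≤ 2 := (hquota h) ▸ hloadμ h
      have : (I.load μ h : ℚ) ≤ 2 := by exact_mod_cast h2
      linarith
  · intro c
    rw [JofHRS_quota, Finset.card_le_one]
    intro a ha b hb
    rcases c with r | h'
    · have ha' := (hmeml a r).mp (mem_SM'.mp ha)
      have hb' := (hmeml b r).mp (mem_SM'.mp hb)
      exact Option.some_inj.mp (ha'.symm.trans hb')
    · exact (((hmemr a h').mp (mem_SM'.mp ha)).1.symm.trans
        (((hmemr b h').mp (mem_SM'.mp hb)).1))
  · rintro h B ⟨hBne, hBcond, hWants, D, hDsub, ⟨b, hbB, hbD⟩, hOD, hlim, -⟩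
    rw [JofHRS_limit] at hlim
    rcases b with r₀ | h''
    · apply hnoblock r₀ h
      have hbacc : I.acc r₀ h := (hBcond _ hbB).1
      have hbnm : (h, Sum.inl r₀) ∉ M := (hBcond _ hbB).2
      refine ⟨hbacc, ?_, ?_, ?_⟩
      · intro he; exact hbnm ((hmeml h r₀).mpr he)
      · rcases hWants _ hbB with hlt | ⟨s', hs', hp'⟩
        · rw [JofHRS_quota] at hlt
          left
          cases he : μ r₀ with
          | none => rfl
          | some h' =>
            exfalso
            have hmm : h' ∈ SM M (Sum.inl r₀) := mem_SM'.mpr ((hmeml h' r₀).mpr he)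
            have := Finset.card_pos.mpr ⟨h', hmm⟩
            omega
        · right
          exact ⟨s', (hmeml s' r₀).mp (mem_SM'.mp hs'), hp'⟩
      · rw [hquota h]
        set Wr := (HRS.assigned μ h).filter (fun r' => I.hPref h r₀ r') with hWr
        have hOB : (I.size r₀ : ℚ) ≤ (JofHRS I).O B := by
          have h1 := (JofHRS I).le_O hbB
          rwa [JofHRS_credits_inl] at h1
        have hDleft : D.toLeft ⊆ Wr := by
          intro r' hr'
          rw [Finset.mem_toLeft] at hr'
          have h1 : Sum.inl r' ∈ CM M h := hDsub hr'
          have h2 := hbD _ hr'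
          rw [JofHRS_sPref_ll] at h2
          rw [hWr, Finset.mem_filter]
          refine ⟨?_, h2⟩
          rw [HRS.assigned, Finset.mem_filter]
          exact ⟨Finset.mem_univ _, (hmeml h r').mp (mem_CM'.mp h1)⟩
        have hDright : D.toRight ⊆ (CM M h).toRight := by
          intro x hx
          rw [Finset.mem_toRight] at hx ⊢
          exact hDsub hx
        have hODle : (JofHRS I).O D
            ≤ (∑ r' ∈ Wr, (I.size r' : ℚ)) + (if I.load μ h ≤ 1 then 1 else 0) := by
          rw [JofHRS_O_split]
          have h1 : ∑ r ∈ D.toLeft, (I.size r : ℚ) ≤ ∑ r' ∈ Wr, (I.size r' : ℚ) :=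
            Finset.sum_le_sum_of_subset_of_nonneg hDleft (fun i _ _ => by positivity)
          have h2 : ((D.toRight.card : ℚ)) ≤ (if I.load μ h ≤ 1 then 1 else 0) := by
            have hcard : D.toRight.card
                ≤ (if I.load μ h ≤ 1 then ({h} : Finset H) else ∅).card := by
              apply Finset.card_le_card
              rw [← hCMright h]
              exact hDright
            by_cases hl : I.load μ h ≤ 1
            · rw [if_pos hl] at hcard ⊢
              rw [Finset.card_singleton] at hcard
              exact_mod_cast hcard
            · rw [if_neg hl] at hcard ⊢
              rw [Finset.card_empty] at hcard
              exact_mod_cast hcard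
          linarith
        have hOCMh := hOCM h
        have hQ : (I.size r₀ : ℚ) + (I.load μ h : ℚ)
            ≤ 2 + ∑ r' ∈ Wr, (I.size r' : ℚ) := by linarith
        exact_mod_cast hQ
    · exfalso
      obtain ⟨hacc', hnm⟩ := hBcond _ hbB
      have hh : h'' = h := hacc'
      rw [hh] at hnm
      have hload2 : ¬ I.load μ h ≤ 1 := fun hl => hnm ((hmemr h h).mpr ⟨rfl, hl⟩)
      have hD0 : D = ∅ := by
        rw [Finset.eq_empty_iff_forall_notMem]
        intro c' hc'
        rcases c' with r | x
        · exact (hbD _ hc')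
        · exact (hbD _ hc')
      rw [hD0, (JofHRS I).O_empty] at hlim
      have hOB1 : (1:ℚ) ≤ (JofHRS I).O B := by
        have h1 := (JofHRS I).le_O hbB
        rwa [JofHRS_credits_inr] at h1
      have hOCMh := hOCM h
      rw [if_neg hload2] at hOCMh
      have h2 : (2:ℚ) ≤ (I.load μ h : ℚ) := by
        have : 2 ≤ I.load μ h := by omega
        exact_mod_cast this
      linarith

end MainLemmas

/-- For an HRS instance `I` in which every resident has size 1 or 2,
every hospital has upper quota 2, and every preference list has length at most 3,
the CA instance `J(I)` admits a first-coalition-stable matching iff `I` admits a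
stable matching. -/
theorem JofHRS_firstCoalitionStable_iff_stable
    {R H : Type*} [Fintype R] [Fintype H] [DecidableEq R] [DecidableEq H]
    (I : HRS R H)
    (hsize : ∀ r, I.size r = 1 ∨ I.size r = 2)
    (hquota : ∀ h, I.quota h = 2)
    (hlenR : ∀ r, {h | I.acc r h}.ncard ≤ 3)
    (hlenH : ∀ h, {r | I.acc r h}.ncard ≤ 3) :
    (∃ M : Finset (H × (R ⊕ H)),
        (JofHRS I).IsMatching M ∧ (JofHRS I).FirstCoalitionStable noF M) ↔
    (∃ μ : R → Option H, I.Stable μ) := by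
  constructor
  · rintro ⟨M, hM, hstab⟩
    exact JofHRS_forward I hsize hquota M hM hstab
  · rintro ⟨μ, hst⟩
    exact JofHRS_backward I hquota μ hst
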